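/- Let R = K[[X_1,...,X_d]] be a power series ring over a field K, let I = (f_1,...,f_n) be an ideal and h ∈ R with h ∉ I. Then there exists r = (r_1,...,r_d) ∈ ℕ^d such that h ∉ (I, X_1^{r_1+1},...,X_d^{r_d+1}) but h·X_i ∈ (I, X_1^{r_1+1},...,X_d^{r_d+1}) for every i = 1,...,d. -/

import Mathlib

open MvPowerSeries
namespace BoxExp
variable {K : Type*} [Field K] {d n : ℕ}

def deg (e : Fin d →₀ ℕ) : ℕ := e.sum fun _ m => m

lemma deg_add (e₁ e₂ : Fin d →₀ ℕ) : deg (e₁ + e₂) = deg e₁ + deg e₂ :=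
  Finsupp.sum_add_index' (fun _ => rfl) (fun _ _ _ => rfl)

lemma apply_le_deg (e : Fin d →₀ ℕ) (i : Fin d) : e i ≤ deg e := by
  by_cases hi : i ∈ e.support
  · exact Finset.single_le_sum (f := fun j => e j) (fun _ _ => Nat.zero_le _) hi
  · simp [Finsupp.notMem_support_iff.mp hi]

def Dk (K : Type*) [Field K] (d : ℕ) (k : ℕ) : Ideal (MvPowerSeries (Fin d) K) where
  carrier := {g | ∀ e, deg e < k → coeff e g = 0}
  add_mem' := by
    intro a b ha hb e he
    rw [map_add, ha e he, hb e he, add_zero]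
  zero_mem' := by intro e he; simp
  smul_mem' := by
    intro c g hg e he
    rw [smul_eq_mul, coeff_mul]
    apply Finset.sum_eq_zero
    rintro ⟨u, v⟩ huv
    rw [Finset.HasAntidiagonal.mem_antidiagonal] at huv
    have hd : deg u + deg v = deg e := by rw [← huv, deg_add]
    rw [hg v (by omega), mul_zero]

lemma mem_Dk {k : ℕ} {g : MvPowerSeries (Fin d) K} :
    g ∈ Dk K d k ↔ ∀ e, deg e < k → coeff e g = 0 := Iff.rfl

noncomputable def sigmaF (f : Fin n → MvPowerSeries (Fin d) K) :
    (Fin n → MvPowerSeries (Fin d) K) →ₗ[K] MvPowerSeries (Fin d) K where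
  toFun a := ∑ j, a j * f j
  map_add' a b := by simp [add_mul, Finset.sum_add_distrib]
  map_smul' c a := by simp [smul_mul_assoc, Finset.smul_sum]

noncomputable def psi (K : Type*) [Field K] (d n k : ℕ) :
    (Fin n → MvPowerSeries (Fin d) K) →ₗ[K] ((Fin n × (Fin d → Fin k)) → K) where
  toFun a := fun p => coeff (Finsupp.equivFunOnFinite.symm fun i => ((p.2 i : ℕ))) (a p.1)
  map_add' a b := by funext p; simp
  map_smul' c a := by funext p; simp

lemma psi_eq_iff {k : ℕ} {a b : Fin n → MvPowerSeries (Fin d) K} :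
    psi K d n k a = psi K d n k b ↔
      ∀ (j : Fin n) (e : Fin d →₀ ℕ), (∀ i, e i < k) → coeff e (a j) = coeff e (b j) := by
  constructor
  · intro H j e he
    have := congrFun H (j, fun i => (⟨e i, he i⟩ : Fin k))
    simpa [psi, Finsupp.equivFunOnFinite_symm_coe] using this
  · intro H
    funext p
    exact H p.1 _ (fun i => by simp [Fin.is_lt])

noncomputable def piL (K : Type*) [Field K] (d n k : ℕ) :
    ((Fin n × (Fin d → Fin (k+1))) → K) →ₗ[K] ((Fin n × (Fin d → Fin k)) → K) :=
  LinearMap.funLeft K K (fun p => (p.1, fun i => (p.2 i).castSucc))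

lemma piL_psi (k : ℕ) (a : Fin n → MvPowerSeries (Fin d) K) :
    piL K d n k (psi K d n (k+1) a) = psi K d n k a := by
  funext p
  simp [piL, psi, LinearMap.funLeft]

/-- solution submodule at precision m -/
noncomputable def Lsub (f : Fin n → MvPowerSeries (Fin d) K) (m : ℕ) :
    Submodule K (Fin n → MvPowerSeries (Fin d) K) :=
  ⨅ (e : Fin d →₀ ℕ) (_ : deg e < m), LinearMap.ker ((coeff e) ∘ₗ sigmaF f)

lemma mem_Lsub {f : Fin n → MvPowerSeries (Fin d) K} {m : ℕ}
    {a : Fin n → MvPowerSeries (Fin d) K} :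
    a ∈ Lsub f m ↔ ∀ e, deg e < m → coeff e (sigmaF f a) = 0 := by
  simp [Lsub, Submodule.mem_iInf, LinearMap.mem_ker]

lemma Lsub_antitone {f : Fin n → MvPowerSeries (Fin d) K} {m m' : ℕ} (h : m ≤ m') :
    Lsub f m' ≤ Lsub f m := by
  intro a ha
  rw [mem_Lsub] at ha ⊢
  exact fun e he => ha e (lt_of_lt_of_le he h)

/-- approximate-solution set at precision m -/
def Tset (f : Fin n → MvPowerSeries (Fin d) K) (h : MvPowerSeries (Fin d) K) (m : ℕ) :
    Set (Fin n → MvPowerSeries (Fin d) K) :=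
  {a | ∀ e, deg e < m → coeff e (sigmaF f a) = coeff e h}

lemma Tset_antitone {f : Fin n → MvPowerSeries (Fin d) K} {h : MvPowerSeries (Fin d) K}
    {m m' : ℕ} (hmm : m ≤ m') : Tset f h m' ⊆ Tset f h m :=
  fun _ ha e he => ha e (lt_of_lt_of_le he hmm)

lemma sub_mem_Lsub {f : Fin n → MvPowerSeries (Fin d) K} {h : MvPowerSeries (Fin d) K}
    {m : ℕ} {a b : Fin n → MvPowerSeries (Fin d) K}
    (ha : a ∈ Tset f h m) (hb : b ∈ Tset f h m) : a - b ∈ Lsub f m := by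
  rw [mem_Lsub]
  intro e he
  rw [map_sub, map_sub, ha e he, hb e he, sub_self]

lemma add_mem_Tset {f : Fin n → MvPowerSeries (Fin d) K} {h : MvPowerSeries (Fin d) K}
    {m : ℕ} {a l : Fin n → MvPowerSeries (Fin d) K}
    (ha : a ∈ Tset f h m) (hl : l ∈ Lsub f m) : a + l ∈ Tset f h m := by
  intro e he
  rw [map_add, map_add, ha e he, (mem_Lsub.mp hl) e he, add_zero]

/-- coefficients of `sigmaF f a` of degree `< k` only depend on coefficients of `a`
of degree `< k`. -/
lemma sigmaF_coeff_congr {f : Fin n → MvPowerSeries (Fin d) K}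
    {k : ℕ} {a b : Fin n → MvPowerSeries (Fin d) K}
    (H : ∀ (j : Fin n) (e : Fin d →₀ ℕ), deg e < k → coeff e (a j) = coeff e (b j))
    {e : Fin d →₀ ℕ} (he : deg e < k) :
    coeff e (sigmaF f a) = coeff e (sigmaF f b) := by
  show coeff e (∑ j, a j * f j) = coeff e (∑ j, b j * f j)
  rw [map_sum, map_sum]
  apply Finset.sum_congr rfl
  intro j _
  rw [coeff_mul, coeff_mul]
  apply Finset.sum_congr rfl
  rintro ⟨u, v⟩ huv
  rw [Finset.HasAntidiagonal.mem_antidiagonal] at huv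
  have hd : deg u + deg v = deg e := by rw [← huv, deg_add]
  rw [H j u (by omega)]

/-- Main engine: if `h` is approximable to every precision by combinations of the `f j`,
then it is an exact combination. -/
lemma exists_exact {f : Fin n → MvPowerSeries (Fin d) K} {h : MvPowerSeries (Fin d) K}
    (hne : ∀ m, (Tset f h m).Nonempty) :
    ∃ a, sigmaF f a = h := by
  classical
  -- stabilization of images of solution modules
  have stab : ∀ k, ∃ N, k ≤ N ∧ ∀ m, N ≤ m →
      Submodule.map (psi K d n k) (Lsub f m) = Submodule.map (psi K d n k) (Lsub f N) := by
    intro k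
    obtain ⟨N, hN⟩ := IsArtinian.monotone_stabilizes
      (R := K) (M := (Fin n × (Fin d → Fin k)) → K)
      ⟨fun m => OrderDual.toDual (Submodule.map (psi K d n k) (Lsub f m)),
        fun _ _ hmm => Submodule.map_mono (Lsub_antitone hmm)⟩
    refine ⟨max k N, le_max_left _ _, fun m hm => ?_⟩
    have h1 := hN m (le_trans (le_max_right _ _) hm)
    have h2 := hN (max k N) (le_max_right _ _)
    exact (h1.symm.trans h2 : _)
  choose N hNk hN using stab
  -- the image sets
  set U : ∀ k : ℕ, Set ((Fin n × (Fin d → Fin k)) → K) :=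
    fun k => psi K d n k '' Tset f h (N k) with hU
  have hUne : ∀ k, (U k).Nonempty := fun k => (hne (N k)).image _
  -- key Mittag-Leffler stability : the image of Tset at any precision ≥ N k equals U k
  have keyML : ∀ k m, N k ≤ m → psi K d n k '' Tset f h m = U k := by
    intro k m hm
    apply Set.Subset.antisymm
    · rintro x ⟨a, ha, rfl⟩
      exact ⟨a, Tset_antitone hm ha, rfl⟩
    · rintro x ⟨a, ha, rfl⟩
      obtain ⟨a', ha'⟩ := hne m
      have haM : a' ∈ Tset f h (N k) := Tset_antitone hm ha'
      have hdiff : a - a' ∈ Lsub f (N k) := sub_mem_Lsub ha haM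
      have : psi K d n k (a - a') ∈ Submodule.map (psi K d n k) (Lsub f m) := by
        rw [hN k m hm]
        exact ⟨a - a', hdiff, rfl⟩
      obtain ⟨l, hl, hpl⟩ := this
      refine ⟨a' + l, add_mem_Tset ha' hl, ?_⟩
      rw [map_add, hpl, map_sub]
      abel
  -- surjectivity of transition maps on the stable images
  have hsurj : ∀ k, piL K d n k '' U (k+1) = U k := by
    intro k
    have h1 : piL K d n k '' (psi K d n (k+1) '' Tset f h (max (N k) (N (k+1))))
        = psi K d n k '' Tset f h (max (N k) (N (k+1))) := by
      rw [Set.image_image]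
      exact Set.image_congr fun a _ => piL_psi k a
    calc piL K d n k '' U (k+1)
        = piL K d n k '' (psi K d n (k+1) '' Tset f h (max (N k) (N (k+1)))) := by
          rw [keyML (k+1) _ (le_max_right _ _)]
      _ = psi K d n k '' Tset f h (max (N k) (N (k+1))) := h1
      _ = U k := keyML k _ (le_max_left _ _)
  -- build a compatible sequence
  have exstep : ∀ k (x : {x // x ∈ U k}), ∃ y, y ∈ U (k+1) ∧ piL K d n k y = x.1 := by
    intro k x
    have hx : x.1 ∈ piL K d n k '' U (k+1) := by rw [hsurj k]; exact x.2
    obtain ⟨y, hy, hyx⟩ := hx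
    exact ⟨y, hy, hyx⟩
  let v : ∀ k, {x // x ∈ U k} := fun k =>
    Nat.rec ⟨(hUne 0).some, (hUne 0).some_mem⟩
      (fun k p => ⟨(exstep k p).choose, (exstep k p).choose_spec.1⟩) k
  have vcompat : ∀ k, piL K d n k (v (k+1)).1 = (v k).1 :=
    fun k => (exstep k (v k)).choose_spec.2
  -- lift to actual approximate solutions
  have hbex : ∀ k, ∃ b, b ∈ Tset f h (N k) ∧ psi K d n k b = (v k).1 := fun k => (v k).2
  choose b hbT hbpsi using hbex
  -- coefficient compatibility
  have bcoeff : ∀ k (j : Fin n) (e : Fin d →₀ ℕ), (∀ i, e i < k) →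
      coeff e (b (k+1) j) = coeff e (b k j) := by
    intro k
    have : psi K d n k (b (k+1)) = psi K d n k (b k) := by
      rw [← piL_psi k (b (k+1)), hbpsi (k+1), vcompat k, hbpsi k]
    exact psi_eq_iff.mp this
  have bstable : ∀ (k k' : ℕ), k ≤ k' → ∀ (j : Fin n) (e : Fin d →₀ ℕ), (∀ i, e i < k) →
      coeff e (b k' j) = coeff e (b k j) := by
    intro k k' hkk'
    induction k' , hkk' using Nat.le_induction with
    | base => intro j e _; rfl
    | succ k' hkk' ih =>
      intro j e he
      rw [bcoeff k' j e (fun i => lt_of_lt_of_le (he i) hkk'), ih j e he]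
  -- the limit
  set a : Fin n → MvPowerSeries (Fin d) K :=
    fun j => (fun e => coeff e (b (deg e + 1) j) : (Fin d →₀ ℕ) → K) with ha
  have hacoeff : ∀ (j : Fin n) (e : Fin d →₀ ℕ), coeff e (a j) = coeff e (b (deg e + 1) j) := by
    intro j e
    rw [coeff_apply]
  have haeq : ∀ (k : ℕ) (j : Fin n) (e : Fin d →₀ ℕ), deg e < k →
      coeff e (a j) = coeff e (b k j) := by
    intro k j e he
    rw [hacoeff j e, ← bstable (deg e + 1) k he j e (fun i => lt_of_le_of_lt (apply_le_deg e i) (Nat.lt_succ_self _))]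
  refine ⟨a, ?_⟩
  apply MvPowerSeries.ext
  intro e
  set k := deg e + 1 with hk
  have h1 : coeff e (sigmaF f a) = coeff e (sigmaF f (b k)) :=
    sigmaF_coeff_congr (fun j e' he' => haeq k j e' he') (Nat.lt_succ_self _)
  have h2 : coeff e (sigmaF f (b k)) = coeff e h :=
    hbT k e (lt_of_lt_of_le (Nat.lt_succ_self _) (hNk k))
  rw [h1, h2]

end BoxExp

namespace Part2
open BoxExp Set

variable {K : Type*} [Field K] {d n : ℕ}

lemma deg_single (i : Fin d) (k : ℕ) : deg (Finsupp.single i k) = k :=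
  Finsupp.sum_single_index rfl

lemma span_pow_le_Dk (k : ℕ) :
    Ideal.span (Set.range fun i : Fin d => (X i : MvPowerSeries (Fin d) K) ^ k) ≤ Dk K d k := by
  rw [Ideal.span_le]
  rintro _ ⟨i, rfl⟩
  intro e he
  rw [coeff_X_pow]
  rw [if_neg]
  intro hcon
  rw [hcon, deg_single] at he
  omega

lemma sigmaF_mem_span (f : Fin n → MvPowerSeries (Fin d) K) (a : Fin n → MvPowerSeries (Fin d) K) :
    sigmaF f a ∈ Ideal.span (Set.range f) := by
  show (∑ j, a j * f j) ∈ _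
  exact Ideal.sum_mem _ fun j _ =>
    Ideal.mul_mem_left _ _ (Ideal.subset_span ⟨j, rfl⟩)

lemma Tset_nonempty_of_mem {f : Fin n → MvPowerSeries (Fin d) K} {h : MvPowerSeries (Fin d) K}
    {k : ℕ}
    (hk : h ∈ Ideal.span (Set.range f) ⊔
        Ideal.span (Set.range fun i : Fin d => (X i : MvPowerSeries (Fin d) K) ^ k)) :
    (Tset f h k).Nonempty := by
  rw [Submodule.mem_sup] at hk
  obtain ⟨y, hy, z, hz, hyz⟩ := hk
  rw [Ideal.mem_span_range_iff_exists_fun] at hy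
  obtain ⟨c, hc⟩ := hy
  refine ⟨c, fun e he => ?_⟩
  have hz0 : coeff e z = 0 := span_pow_le_Dk k hz e he
  have : coeff e h = coeff e y + coeff e z := by rw [← map_add, hyz]
  have hcy : sigmaF f c = y := hc
  rw [hcy, this, hz0, add_zero]

lemma mul_step {f : Fin n → MvPowerSeries (Fin d) K} {r r' : Fin d → ℕ} {i : Fin d}
    (hne : ∀ j, j ≠ i → r' j = r j) (hi : r' i + 1 = r i)
    {x : MvPowerSeries (Fin d) K}
    (hx : x ∈ Ideal.span (Set.range f) ⊔
        Ideal.span (Set.range fun j : Fin d => (X j : MvPowerSeries (Fin d) K) ^ (r' j + 1))) :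
    x * X i ∈ Ideal.span (Set.range f) ⊔
        Ideal.span (Set.range fun j : Fin d => (X j : MvPowerSeries (Fin d) K) ^ (r j + 1)) := by
  rw [← Ideal.span_union] at hx
  induction hx using Submodule.span_induction with
  | mem y hy =>
    rcases hy with ⟨j, rfl⟩ | ⟨j, rfl⟩
    · exact Ideal.mem_sup_left (Ideal.mul_mem_right _ _ (Ideal.subset_span ⟨j, rfl⟩))
    · by_cases hji : j = i
      · subst hji
        have heq : (fun j : Fin d => (X j : MvPowerSeries (Fin d) K) ^ (r' j + 1)) j * X j
            = X j ^ (r j + 1) := by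
          show (X j : MvPowerSeries (Fin d) K) ^ (r' j + 1) * X j = _
          rw [← pow_succ, hi]
        rw [heq]
        exact Ideal.mem_sup_right (Ideal.subset_span ⟨j, rfl⟩)
      · have hmem : (X j : MvPowerSeries (Fin d) K) ^ (r' j + 1) ∈
            Ideal.span (Set.range fun j : Fin d => (X j : MvPowerSeries (Fin d) K) ^ (r j + 1)) := by
          rw [hne j hji]
          exact Ideal.subset_span ⟨j, rfl⟩
        exact Ideal.mem_sup_right
          (Ideal.mul_mem_right _ _ hmem)
  | zero => rw [zero_mul]; exact zero_mem _
  | add y z _ _ hy hz => rw [add_mul]; exact add_mem hy hz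
  | smul c y _ hy =>
    rw [smul_eq_mul, mul_assoc]
    exact Ideal.mul_mem_left _ _ hy

end Part2

open BoxExp Part2

/-- Let `R = K[[X₁,…,X_d]]`, `I = (f₁,…,fₙ)` and `h ∉ I`. Then there is
`r = (r₁,…,r_d) ∈ ℕ^d` with `h ∉ (I, X₁^{r₁+1},…,X_d^{r_d+1})` but
`h·Xᵢ ∈ (I, X₁^{r₁+1},…,X_d^{r_d+1})` for every `i`. -/
theorem exists_box_exponent {K : Type*} [Field K] {d n : ℕ}
    (f : Fin n → MvPowerSeries (Fin d) K) (h : MvPowerSeries (Fin d) K)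
    (hh : h ∉ Ideal.span (Set.range f)) :
    ∃ r : Fin d → ℕ,
      h ∉ Ideal.span (Set.range f) ⊔
          Ideal.span (Set.range fun i => MvPowerSeries.X i ^ (r i + 1)) ∧
        ∀ i : Fin d, h * MvPowerSeries.X i ∈
          Ideal.span (Set.range f) ⊔
            Ideal.span (Set.range fun i => MvPowerSeries.X i ^ (r i + 1)) := by
  classical
  -- Step 1: there is some uniform exponent k with h ∉ (I, X₁^{k+1},…)
  have hex : ∃ k : ℕ, h ∉ Ideal.span (Set.range f) ⊔
      Ideal.span (Set.range fun i : Fin d => (X i : MvPowerSeries (Fin d) K) ^ (k + 1)) := by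
    by_contra hcon
    push_neg at hcon
    have hne : ∀ m, (Tset f h m).Nonempty := by
      intro m
      obtain ⟨a, ha⟩ := Tset_nonempty_of_mem (k := m + 1) (hcon m)
      exact ⟨a, Tset_antitone (Nat.le_succ m) ha⟩
    obtain ⟨a, ha⟩ := exists_exact hne
    exact hh (ha ▸ sigmaF_mem_span f a)
  obtain ⟨k, hk⟩ := hex
  -- Step 2: minimize the total sum of exponent vectors
  set S : Set ℕ := {s : ℕ | ∃ r : Fin d → ℕ, (∑ i, r i) = s ∧
      h ∉ Ideal.span (Set.range f) ⊔
        Ideal.span (Set.range fun i : Fin d => (X i : MvPowerSeries (Fin d) K) ^ (r i + 1))}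
    with hS
  have hSne : (∑ _i : Fin d, k) ∈ S := ⟨fun _ => k, rfl, hk⟩
  obtain ⟨r, hrsum, hr⟩ := Nat.sInf_mem ⟨_, hSne⟩
  refine ⟨r, hr, fun i => ?_⟩
  rcases hri : r i with _ | s
  · -- r i = 0 : X i itself is a generator
    have : (X i : MvPowerSeries (Fin d) K) ∈
        Ideal.span (Set.range fun j : Fin d => (X j : MvPowerSeries (Fin d) K) ^ (r j + 1)) := by
      have := Ideal.subset_span (s := Set.range fun j : Fin d =>
        (X j : MvPowerSeries (Fin d) K) ^ (r j + 1)) ⟨i, rfl⟩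
      simpa [hri] using this
    exact Ideal.mem_sup_right (Ideal.mul_mem_left _ h this)
  · -- r i = s + 1 : decrease the i-th exponent
    set r' : Fin d → ℕ := Function.update r i s with hr'
    have hsum' : (∑ j, r' j) + 1 = ∑ j, r j := by
      rw [hr', Finset.sum_update_of_mem (Finset.mem_univ i),
        Finset.sum_eq_sum_sdiff_singleton_add (Finset.mem_univ i) r, hri]
      omega
    have hr'mem : h ∈ Ideal.span (Set.range f) ⊔
        Ideal.span (Set.range fun j : Fin d => (X j : MvPowerSeries (Fin d) K) ^ (r' j + 1)) := by
      by_contra hcon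
      have hmem : (∑ j, r' j) ∈ S := ⟨r', rfl, hcon⟩
      have := Nat.sInf_le hmem
      omega
    exact mul_step (fun j hj => Function.update_of_ne hj _ _)
      (by rw [hr', Function.update_self, hri]) hr'mem
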